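/- Let H be a complex Hilbert space, E ⊆ B(H) a selfadjoint subspace, and φ a contractive positive functional on E satisfying ‖φ‖ = sSup { Re(φ x) : x ∈ E₊, ‖x‖ ≤ 1 }. Then: (a) every continuous ℂ-linear functional ψ : B(H) → ℂ with ψ(star a) = conj(ψ a) for all a ∈ B(H), ψ|_E = φ, and ‖ψ‖ = ‖φ‖ is automatically a positive functional on B(H); and consequently (b) φ extends to a positive functional on B(H) of the same norm. -/

import Mathlib

open scoped ComplexOrder

noncomputable section

-- aux: norm of difference of positive contractions
lemma aux_norm_sub {A : Type*} [CStarAlgebra A] [PartialOrder A] [StarOrderedRing A]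
    {x a : A} (hx0 : 0 ≤ x) (hx1 : ‖x‖ ≤ 1) (ha0 : 0 ≤ a) (ha1 : ‖a‖ ≤ 1) :
    ‖x - a‖ ≤ 1 := by
  have hxsa : IsSelfAdjoint x := .of_nonneg hx0
  have hasa : IsSelfAdjoint a := .of_nonneg ha0
  have hbsa : IsSelfAdjoint (x - a) := hxsa.sub hasa
  have hxle : x ≤ algebraMap ℝ A 1 :=
    (CStarAlgebra.norm_le_iff_le_algebraMap x zero_le_one hx0).mp hx1
  have hale : a ≤ algebraMap ℝ A 1 :=
    (CStarAlgebra.norm_le_iff_le_algebraMap a zero_le_one ha0).mp ha1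
  have h1 : x - a ≤ algebraMap ℝ A 1 :=
    le_trans (sub_le_self x ha0) hxle
  have h2 : algebraMap ℝ A (-1) ≤ x - a := by
    have : -a ≤ x - a := by simpa using sub_le_sub_right hx0 a
    refine le_trans ?_ this
    rw [map_neg]
    exact neg_le_neg hale
  rcases subsingleton_or_nontrivial A with h | h
  · simp [Subsingleton.elim (x - a) 0]
  · rcases CStarAlgebra.norm_or_neg_norm_mem_spectrum hbsa with hmem | hmem
    · exact (le_algebraMap_iff_spectrum_le (a := x - a) hbsa).mp h1 _ hmem
    · have := (algebraMap_le_iff_le_spectrum (a := x - a) hbsa).mp h2 _ hmem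
      linarith
-- aux: smul by nonneg real preserves positivity (Loewner order)
lemma aux_smul {H : Type*} [NormedAddCommGroup H] [InnerProductSpace ℂ H] [CompleteSpace H]
    {a : H →L[ℂ] H} (ha : 0 ≤ a) {c : ℝ} (hc : 0 ≤ c) : 0 ≤ (c : ℂ) • a := by
  rw [ContinuousLinearMap.nonneg_iff_isPositive] at ha ⊢
  rw [ContinuousLinearMap.isPositive_def']
  constructor
  · show star _ = _
    rw [star_smul, Complex.star_def, Complex.conj_ofReal, ha.isSelfAdjoint.star_eq]
  intro v
  have := ha.2 v
  simp only [ContinuousLinearMap.reApplyInnerSelf, ContinuousLinearMap.smul_apply,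
    inner_smul_left, Complex.conj_ofReal] at this ⊢
  simpa [Complex.mul_re] using mul_nonneg hc this

/-- **Lemma 4.13.** Let `E ⊆ B(H)` be a selfadjoint subspace and `φ` a
contractive positive functional on `E` whose norm is the supremum of its (real) values on the
positive part of the unit ball of `E`.  Then (a) every selfadjoint Hahn–Banach extension of
`φ` to `B(H)` of the same norm is automatically positive, and (b) `φ` extends to a positive
functional on `B(H)` of the same norm. -/
theorem stmt_11 {H : Type*} [NormedAddCommGroup H] [InnerProductSpace ℂ H] [CompleteSpace H]
    (E : Submodule ℂ (H →L[ℂ] H)) (hEclosed : IsClosed (E : Set (H →L[ℂ] H)))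
    (hEstar : ∀ x ∈ E, star x ∈ E)
    (φ : E →L[ℂ] ℂ)
    (hstar : ∀ (x : H →L[ℂ] H) (hx : x ∈ E) (hsx : star x ∈ E),
      φ ⟨star x, hsx⟩ = starRingEnd ℂ (φ ⟨x, hx⟩))
    (hpos : ∀ (x : H →L[ℂ] H) (hx : x ∈ E), 0 ≤ x → 0 ≤ φ ⟨x, hx⟩)
    (hcontr : ‖φ‖ ≤ 1)
    (hnorm : ‖φ‖ = sSup {r : ℝ | ∃ (x : H →L[ℂ] H) (hx : x ∈ E),
      0 ≤ x ∧ ‖x‖ ≤ 1 ∧ r = (φ ⟨x, hx⟩).re}) :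
    (∀ ψ : (H →L[ℂ] H) →L[ℂ] ℂ,
      (∀ a : H →L[ℂ] H, ψ (star a) = starRingEnd ℂ (ψ a)) →
      (∀ (x : H →L[ℂ] H) (hx : x ∈ E), ψ x = φ ⟨x, hx⟩) →
      ‖ψ‖ = ‖φ‖ →
      ∀ a : H →L[ℂ] H, 0 ≤ a → 0 ≤ ψ a) ∧
    (∃ ψ : (H →L[ℂ] H) →L[ℂ] ℂ,
      (∀ a : H →L[ℂ] H, 0 ≤ a → 0 ≤ ψ a) ∧
      (∀ (x : H →L[ℂ] H) (hx : x ∈ E), ψ x = φ ⟨x, hx⟩) ∧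
      ‖ψ‖ = ‖φ‖) := by
  have hSne : ({r : ℝ | ∃ (x : H →L[ℂ] H) (hx : x ∈ E),
      0 ≤ x ∧ ‖x‖ ≤ 1 ∧ r = (φ ⟨x, hx⟩).re}).Nonempty := by
    refine ⟨0, 0, E.zero_mem, le_refl 0, by simp, ?_⟩
    have : (⟨0, E.zero_mem⟩ : E) = 0 := rfl
    rw [this, map_zero]
    simp
  have partA : ∀ ψ : (H →L[ℂ] H) →L[ℂ] ℂ,
      (∀ a : H →L[ℂ] H, ψ (star a) = starRingEnd ℂ (ψ a)) →
      (∀ (x : H →L[ℂ] H) (hx : x ∈ E), ψ x = φ ⟨x, hx⟩) →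
      ‖ψ‖ = ‖φ‖ →
      ∀ a : H →L[ℂ] H, 0 ≤ a → 0 ≤ ψ a := by
    intro ψ hψs hψe hψn a ha
    suffices hsuff : ∀ b : H →L[ℂ] H, 0 ≤ b → ‖b‖ ≤ 1 → 0 ≤ ψ b by
      rcases eq_or_ne a 0 with rfl | hne
      · simp
      have hna : 0 < ‖a‖ := norm_pos_iff.mpr hne
      have h1 : 0 ≤ ((‖a‖⁻¹ : ℝ) : ℂ) • a := aux_smul ha (by positivity)
      have h2 : ‖((‖a‖⁻¹ : ℝ) : ℂ) • a‖ ≤ 1 := by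
        rw [norm_smul]
        simp [abs_of_nonneg (le_of_lt (inv_pos.mpr hna)), inv_mul_cancel₀ (ne_of_gt hna)]
      have h3 := hsuff _ h1 h2
      have h4 : 0 ≤ ((‖a‖ : ℂ)) * ψ (((‖a‖⁻¹ : ℝ) : ℂ) • a) :=
        mul_nonneg (by exact_mod_cast Complex.zero_le_real.mpr (norm_nonneg a)) h3
      have h5 : ((‖a‖ : ℂ)) * ψ (((‖a‖⁻¹ : ℝ) : ℂ) • a) = ψ a := by
        rw [map_smul, smul_eq_mul, ← mul_assoc]
        norm_cast
        rw [mul_inv_cancel₀ (ne_of_gt hna)]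
        simp
      rwa [h5] at h4
    intro b hb0 hb1
    have hbsa : IsSelfAdjoint b :=
      ((ContinuousLinearMap.nonneg_iff_isPositive b).mp hb0).isSelfAdjoint
    have him : (ψ b).im = 0 := by
      have := hψs b
      rw [hbsa.star_eq] at this
      exact Complex.conj_eq_iff_im.mp this.symm
    have hre : 0 ≤ (ψ b).re := by
      by_contra hcon
      push_neg at hcon
      set ε : ℝ := -(ψ b).re with hε
      have hεpos : 0 < ε := by simp [hε]; linarith
      obtain ⟨r, hrS, hrgt⟩ := exists_lt_of_lt_csSup hSne
        (show ‖φ‖ - ε < sSup _ from by rw [← hnorm]; linarith)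
      obtain ⟨x, hxE, hx0, hx1, rfl⟩ := hrS
      have hsub : ‖x - b‖ ≤ 1 := aux_norm_sub hx0 hx1 hb0 hb1
      have hub : (ψ (x - b)).re ≤ ‖φ‖ := by
        calc (ψ (x - b)).re ≤ ‖ψ (x - b)‖ := Complex.re_le_norm _
          _ ≤ ‖ψ‖ * ‖x - b‖ := ψ.le_opNorm _
          _ ≤ ‖φ‖ * 1 := by rw [hψn]; exact mul_le_mul_of_nonneg_left hsub (norm_nonneg φ)
          _ = ‖φ‖ := mul_one _
      have heq : (ψ (x - b)).re = (φ ⟨x, hxE⟩).re - (ψ b).re := by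
        rw [map_sub, Complex.sub_re, hψe x hxE]
      linarith
    rw [Complex.le_def]
    exact ⟨by simpa using hre, by simp [him]⟩
  refine ⟨partA, ?_⟩
  obtain ⟨ψ₀, hext, hnrm⟩ := exists_extension_norm_eq (E : Subspace ℂ (H →L[ℂ] H)) φ
  let ψ₁ : (H →L[ℂ] H) →L[ℂ] ℂ :=
    (((starL ℂ : ℂ ≃L⋆[ℂ] ℂ) : ℂ →SL[starRingEnd ℂ] ℂ).comp
      (ψ₀.comp ((starL ℂ : (H →L[ℂ] H) ≃L⋆[ℂ] (H →L[ℂ] H)) :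
        (H →L[ℂ] H) →SL[starRingEnd ℂ] (H →L[ℂ] H))))
  have hψ₁ : ∀ a : H →L[ℂ] H, ψ₁ a = starRingEnd ℂ (ψ₀ (star a)) := fun a => rfl
  set ψ : (H →L[ℂ] H) →L[ℂ] ℂ := (2⁻¹ : ℂ) • (ψ₀ + ψ₁) with hψdef
  have hψapp : ∀ a : H →L[ℂ] H, ψ a = (2⁻¹ : ℂ) * (ψ₀ a + starRingEnd ℂ (ψ₀ (star a))) := by
    intro a; simp [hψdef, hψ₁ a]; ring
  have hψext : ∀ (x : H →L[ℂ] H) (hx : x ∈ E), ψ x = φ ⟨x, hx⟩ := by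
    intro x hx
    have h₁ : ψ₀ x = φ ⟨x, hx⟩ := hext ⟨x, hx⟩
    have h₂ : ψ₀ (star x) = φ ⟨star x, hEstar x hx⟩ := hext ⟨star x, hEstar x hx⟩
    rw [hψapp, h₁, h₂, hstar x hx (hEstar x hx), Complex.conj_conj]
    ring
  have hψs : ∀ a : H →L[ℂ] H, ψ (star a) = starRingEnd ℂ (ψ a) := by
    intro a
    rw [hψapp, hψapp, star_star]
    rw [map_mul, map_add, Complex.conj_conj, map_inv₀, map_ofNat]
    ring
  have hψn : ‖ψ‖ = ‖φ‖ := by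
    refine le_antisymm ?_ ?_
    · refine ContinuousLinearMap.opNorm_le_bound _ (norm_nonneg φ) fun a => ?_
      rw [hψapp]
      calc ‖(2⁻¹ : ℂ) * (ψ₀ a + starRingEnd ℂ (ψ₀ (star a)))‖
          = 2⁻¹ * ‖ψ₀ a + starRingEnd ℂ (ψ₀ (star a))‖ := by
            rw [norm_mul]; norm_num
        _ ≤ 2⁻¹ * (‖ψ₀ a‖ + ‖ψ₀ (star a)‖) := by
            gcongr
            exact (norm_add_le _ _).trans (by rw [RCLike.norm_conj])
        _ ≤ 2⁻¹ * (‖ψ₀‖ * ‖a‖ + ‖ψ₀‖ * ‖star a‖) := by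
            gcongr <;> [exact ψ₀.le_opNorm a; exact ψ₀.le_opNorm (star a)]
        _ = ‖φ‖ * ‖a‖ := by rw [norm_star, hnrm]; ring
    · refine ContinuousLinearMap.opNorm_le_bound _ (norm_nonneg ψ) fun x => ?_
      rw [← hψext x.1 x.2]
      have : (⟨x.1, x.2⟩ : E) = x := rfl
      exact (ψ.le_opNorm x.1)
  exact ⟨ψ, partA ψ hψs hψext hψn, hψext, hψn⟩
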